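/- Fix c > 0 and β > 0, and for integers n ≥ 0 let M_n(β,c) = 2·∫₀¹ exp(−c·(1−r)^{−β})·r^{2n+1} dr, and put β̃ = β/(β+1). Then there exist d > 0 and N such that for all n ≥ N, exp(−2d·n^{β̃}) ≤ M_n(β,c) ≤ exp(−d·n^{β̃}); moreover d can be taken of the form d = κ·c^{1/(β+1)} with κ > 0 depending only on β. -/

import Mathlib

open MeasureTheory Set Filter
open scoped Real ENNReal Topology

set_option maxHeartbeats 1000000
noncomputable section

def momentT1 (β c : ℝ) (n : ℕ) : ℝ :=
  2 * ∫ r in Set.Ioo (0:ℝ) 1, Real.exp (-c * (1 - r) ^ (-β)) * r ^ (2 * n + 1)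

private lemma mt1_integrableOn (β c : ℝ) (hc : 0 < c) (m : ℕ) :
    IntegrableOn (fun r : ℝ => Real.exp (-c * (1 - r) ^ (-β)) * r ^ m) (Ioo 0 1) := by
  have hmeas : AEStronglyMeasurable (fun r : ℝ => Real.exp (-c * (1 - r) ^ (-β)) * r ^ m)
      (volume.restrict (Ioo (0:ℝ) 1)) := by
    apply Measurable.aestronglyMeasurable
    fun_prop
  refine Integrable.mono' (g := fun _ : ℝ => (1:ℝ))
    (integrableOn_const measure_Ioo_lt_top.ne (by simp)) hmeas ?_
  filter_upwards [ae_restrict_mem measurableSet_Ioo] with r hr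
  obtain ⟨hr0, hr1⟩ := hr
  have h1 : Real.exp (-c * (1 - r) ^ (-β)) ≤ 1 := by
    rw [Real.exp_le_one_iff]
    have : (0:ℝ) ≤ (1 - r) ^ (-β) := Real.rpow_nonneg (by linarith) _
    nlinarith
  have h2 : r ^ m ≤ 1 := pow_le_one₀ hr0.le hr1.le
  have h3 : (0:ℝ) ≤ r ^ m := pow_nonneg hr0.le _
  rw [Real.norm_eq_abs, abs_of_nonneg (by positivity)]
  nlinarith [Real.exp_pos (-c * (1 - r) ^ (-β))]

private lemma mt1_amgm (β : ℝ) (hβ : 0 < β) {c A t : ℝ} (hc : 0 < c) (hA : 0 < A) (ht : 0 < t) :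
    (β + 1) * β ^ (-(β / (β + 1))) * c ^ (1 / (β + 1)) * A ^ (β / (β + 1))
      ≤ c * t ^ (-β) + A * t := by
  have hβ1 : (0:ℝ) < β + 1 := by linarith
  set w₁ : ℝ := 1 / (β + 1) with hw₁
  set w₂ : ℝ := β / (β + 1) with hw₂
  have hw : w₁ + w₂ = 1 := by rw [hw₁, hw₂]; field_simp; ring
  have htβ : (0:ℝ) ≤ t ^ (-β) := Real.rpow_nonneg ht.le _
  set p₁ : ℝ := (β + 1) * (c * t ^ (-β)) with hp₁
  set p₂ : ℝ := ((β + 1) / β) * (A * t) with hp₂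
  have hp₁0 : 0 ≤ p₁ := by positivity
  have hp₂0 : 0 ≤ p₂ := by positivity
  have key := Real.geom_mean_le_arith_mean2_weighted (by positivity : (0:ℝ) ≤ w₁)
    (by positivity : (0:ℝ) ≤ w₂) hp₁0 hp₂0 hw
  have hrhs : w₁ * p₁ + w₂ * p₂ = c * t ^ (-β) + A * t := by
    rw [hp₁, hp₂, hw₁, hw₂]; field_simp
  have hb : (β + 1) ^ w₁ * (β + 1) ^ w₂ = β + 1 := by
    rw [← Real.rpow_add hβ1, hw, Real.rpow_one]
  have ht1 : t ^ (-β * w₁) * t ^ w₂ = 1 := by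
    rw [← Real.rpow_add ht, show -β * w₁ + w₂ = 0 by rw [hw₁, hw₂]; ring, Real.rpow_zero]
  have hlhs : p₁ ^ w₁ * p₂ ^ w₂
      = (β + 1) * β ^ (-w₂) * c ^ w₁ * A ^ w₂ * (t ^ (-β * w₁) * t ^ w₂) := by
    rw [hp₁, hp₂,
        Real.mul_rpow (by positivity) (by positivity),
        Real.mul_rpow hc.le htβ,
        Real.mul_rpow (by positivity) (by positivity),
        Real.mul_rpow hA.le ht.le,
        Real.div_rpow hβ1.le hβ.le,
        div_eq_mul_inv, ← Real.rpow_neg hβ.le,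
        ← Real.rpow_mul ht.le]
    linear_combination (c ^ w₁ * A ^ w₂ * β ^ (-w₂) * (t ^ (-β * w₁) * t ^ w₂)) * hb
  rw [hrhs, hlhs, ht1, mul_one] at key
  exact key

/-- **Moment estimates for the weights exp(-c(1-|z|)^{-β}).** With β̃ = β/(β+1),
exp(-2d n^β̃) ≤ Mₙ(β,c) ≤ exp(-d n^β̃) for large n, where d = κ c^{1/(β+1)} and
κ > 0 depends only on β. -/
theorem momentT1_estimates (β : ℝ) (hβ : 0 < β) :
    ∃ κ > (0:ℝ), ∀ c > (0:ℝ), ∃ N : ℕ, ∀ n ≥ N,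
      Real.exp (-2 * (κ * c ^ (1 / (β + 1))) * (n : ℝ) ^ (β / (β + 1)))
          ≤ momentT1 β c n ∧
        momentT1 β c n
          ≤ Real.exp (-(κ * c ^ (1 / (β + 1))) * (n : ℝ) ^ (β / (β + 1))) := by
  have hβ1 : (0:ℝ) < β + 1 := by linarith
  set γ : ℝ := β / (β + 1) with hγdef
  have hγ0 : 0 < γ := by positivity
  have hγ1 : γ < 1 := by rw [hγdef, div_lt_one hβ1]; linarith
  have hwγ : 1 / (β + 1) = 1 - γ := by rw [hγdef]; field_simp; ring
  set Bβ : ℝ := (β + 1) * β ^ (-γ) with hBdef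
  have hB0 : 0 < Bβ := by positivity
  have hBeq : Bβ = β ^ (-γ) + β ^ (1 - γ) := by
    have h := Real.rpow_add hβ 1 (-γ)
    rw [Real.rpow_one] at h
    rw [hBdef, show (1:ℝ) - γ = 1 + -γ by ring, h]
    ring
  set κ : ℝ := (3/4) * (Bβ * 2 ^ γ) with hκdef
  have hκ0 : 0 < κ := by positivity
  refine ⟨κ, hκ0, ?_⟩
  intro c hc
  set c' : ℝ := c ^ (1 / (β + 1)) with hc'def
  have hc'0 : 0 < c' := Real.rpow_pos_of_pos hc _
  set θ : ℝ := (2:ℝ) ^ (-(1 / (5 * β))) with hθdef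
  have hθ0 : 0 < θ := Real.rpow_pos_of_pos two_pos _
  have hθ1 : θ < 1 := by
    rw [hθdef]
    apply Real.rpow_lt_one_of_one_lt_of_neg one_lt_two
    rw [neg_lt, neg_zero]; positivity
  have hθβ : θ ^ (-β) ≤ 1.2 := by
    have h1 : θ ^ (-β) = (2:ℝ) ^ ((1:ℝ)/5) := by
      rw [hθdef, ← Real.rpow_mul (by norm_num : (0:ℝ) ≤ 2)]
      congr 1
      field_simp
    have h2 : ((2:ℝ) ^ ((1:ℝ)/5)) ^ (5:ℕ) = 2 := by
      rw [← Real.rpow_natCast ((2:ℝ) ^ ((1:ℝ)/5)) 5, ← Real.rpow_mul (by norm_num : (0:ℝ) ≤ 2)]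
      norm_num
    rw [h1]
    refine le_of_pow_le_pow_left₀ (n := 5) (by norm_num) (by norm_num) ?_
    rw [h2]; norm_num
  -- margin constant
  set m : ℝ := (3/2) * Bβ - (1.2 * β ^ (-γ) + 1.32 * β ^ (1 - γ)) with hmdef
  have hm0 : 0 < m := by
    have : m = 0.3 * β ^ (-γ) + 0.18 * β ^ (1 - γ) := by rw [hmdef, hBeq]; ring
    rw [this]; positivity
  -- the eventual conditions
  have hE1 : ∀ᶠ n : ℕ in atTop, Real.log 2 ≤ κ / 3 * c' * (n:ℝ) ^ γ := by
    have htend : Tendsto (fun n : ℕ => κ / 3 * c' * (n:ℝ) ^ γ) atTop atTop := by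
      apply Tendsto.const_mul_atTop (by positivity : (0:ℝ) < κ / 3 * c')
      exact (tendsto_rpow_atTop hγ0).comp tendsto_natCast_atTop_atTop
    exact htend.eventually_ge_atTop _
  have hE2 : ∀ᶠ n : ℕ in atTop, (β * c / (2 * (n:ℝ))) ^ (1 / (β + 1)) ≤ 1/6 := by
    have hdiv : Tendsto (fun n : ℕ => β * c / (2 * (n:ℝ))) atTop (𝓝 0) :=
      Tendsto.div_atTop tendsto_const_nhds
        (Tendsto.const_mul_atTop two_pos tendsto_natCast_atTop_atTop)
    have hcont := (Real.continuousAt_rpow_const 0 (1 / (β + 1))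
      (Or.inr (by positivity))).tendsto
    have hcomp := hcont.comp hdiv
    rw [Real.zero_rpow (by positivity : 1 / (β + 1) ≠ 0)] at hcomp
    exact (hcomp.eventually_lt_const (by norm_num : (0:ℝ) < 1/6)).mono fun n h => h.le
  have hE4 : ∀ᶠ n : ℕ in atTop,
      (n:ℝ) * Real.exp (-(m * 2 ^ γ * c') * (n:ℝ) ^ γ) ≤ (1 - θ) * (β * c) ^ (1 / (β + 1)) := by
    have hε : (0:ℝ) < m * 2 ^ γ * c' := by positivity
    have base := tendsto_rpow_mul_exp_neg_mul_atTop_nhds_zero (1/γ) _ hε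
    have hcomp := base.comp (tendsto_rpow_atTop hγ0)
    have hx : Tendsto (fun x : ℝ => x * Real.exp (-(m * 2 ^ γ * c') * x ^ γ)) atTop (𝓝 0) := by
      apply hcomp.congr'
      filter_upwards [eventually_gt_atTop (0:ℝ)] with x hx
      simp only [Function.comp_apply]
      rw [← Real.rpow_mul hx.le, mul_one_div, div_self hγ0.ne', Real.rpow_one]
    have hnat := hx.comp tendsto_natCast_atTop_atTop
    have hpos : (0:ℝ) < (1 - θ) * (β * c) ^ (1 / (β + 1)) :=
      mul_pos (by linarith) (Real.rpow_pos_of_pos (by positivity) _)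
    exact (hnat.eventually_lt_const hpos).mono fun n h => h.le
  obtain ⟨N, hN⟩ := eventually_atTop.mp ((hE1.and hE2).and (hE4.and (eventually_ge_atTop 5)))
  refine ⟨N, fun n hn => ?_⟩
  obtain ⟨⟨h1, h2⟩, h4, h5⟩ := hN n hn
  have hn5 : (5:ℝ) ≤ (n:ℝ) := by exact_mod_cast h5
  have hnR : (0:ℝ) < (n:ℝ) := by linarith
  have hn2 : (0:ℝ) < 2 * (n:ℝ) := by linarith
  have h2nγ : ((2:ℝ) * n) ^ γ = 2 ^ γ * (n:ℝ) ^ γ :=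
    Real.mul_rpow (by norm_num) hnR.le
  constructor
  · -- LOWER BOUND
    set t : ℝ := (β * c / (2 * (n:ℝ))) ^ (1 / (β + 1)) with htdef
    have ht0 : 0 < t := Real.rpow_pos_of_pos (by positivity) _
    have ht6 : t ≤ 1/6 := h2
    have hθt : 0 < θ * t := by positivity
    have hθtt : θ * t < t := by simpa using mul_lt_mul_of_pos_right hθ1 ht0
    -- rpow identities
    have e2 : c ^ (1 - γ) = c * c ^ (-γ) := by
      rw [show (1:ℝ) - γ = 1 + -γ by ring, Real.rpow_add hc, Real.rpow_one]
    have htpow : c * t ^ (-β) = β ^ (-γ) * c' * ((2 * (n:ℝ)) ^ γ) := by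
      have e1 : t ^ (-β) = (β * c) ^ (-γ) * ((2 * (n:ℝ)) ^ γ) := by
        rw [htdef, ← Real.rpow_mul (by positivity),
          show 1 / (β + 1) * (-β) = -γ by rw [hγdef]; ring,
          Real.div_rpow (by positivity) hn2.le, Real.rpow_neg hn2.le, div_eq_mul_inv, inv_inv]
      rw [e1, Real.mul_rpow hβ.le hc.le, hc'def, hwγ, e2]; ring
    have e3 : t = (β * c) ^ (1 - γ) * ((2 * (n:ℝ)) ^ (1 - γ))⁻¹ := by
      rw [htdef, hwγ, Real.div_rpow (by positivity) hn2.le, div_eq_mul_inv]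
    have e4 : 2 * (n:ℝ) * ((2 * (n:ℝ)) ^ ((1:ℝ) - γ))⁻¹ = (2 * (n:ℝ)) ^ γ := by
      have h := Real.rpow_add hn2 1 (-(1 - γ))
      rw [Real.rpow_one, Real.rpow_neg hn2.le] at h
      rw [← h]; congr 1; ring
    have hbc : (β * c) ^ ((1:ℝ) - γ) = β ^ ((1:ℝ) - γ) * c' := by
      rw [Real.mul_rpow hβ.le hc.le, hc'def, hwγ]
    have htlin : 2 * (n:ℝ) * t = β ^ (1 - γ) * c' * ((2 * (n:ℝ)) ^ γ) := by
      rw [e3, hbc]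
      linear_combination β ^ ((1:ℝ) - γ) * c' * e4
    -- the interval
    have hsub : Ioc (1 - t) (1 - θ * t) ⊆ Ioo (0:ℝ) 1 := by
      intro r hr
      obtain ⟨ha, hb⟩ := hr
      exact ⟨by linarith, by linarith⟩
    set C0 : ℝ := Real.exp (-(c * (θ * t) ^ (-β) + 1.2 * (2 * (n:ℝ) + 1) * t)) with hC0
    have hpt : ∀ r ∈ Ioc (1 - t) (1 - θ * t),
        C0 ≤ Real.exp (-c * (1 - r) ^ (-β)) * r ^ (2 * n + 1) := by
      intro r hr
      obtain ⟨ha, hb⟩ := hr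
      have h1r : θ * t ≤ 1 - r := by linarith
      have h1r' : 1 - r < t := by linarith
      have hr0 : 0 < r := by linarith
      have hexp1 : Real.exp (-(c * (θ * t) ^ (-β))) ≤ Real.exp (-c * (1 - r) ^ (-β)) := by
        rw [Real.exp_le_exp]
        have h := Real.rpow_le_rpow_of_nonpos hθt h1r (neg_nonpos.mpr hβ.le)
        have h' := mul_le_mul_of_nonneg_left h hc.le
        linarith
      have hexp2 : Real.exp (-(1.2 * (2 * (n:ℝ) + 1) * t)) ≤ r ^ (2 * n + 1) := by
        have hebd : Real.exp (-(1.2 * t)) ≤ 1 - t := by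
          have hh : 1 + 1.2 * t ≤ Real.exp (1.2 * t) := by
            have := Real.add_one_le_exp (1.2 * t); linarith
          have i2 : (Real.exp (1.2 * t))⁻¹ ≤ (1 + 1.2 * t)⁻¹ :=
            inv_anti₀ (by positivity) hh
          have i3 : (1 + 1.2 * t)⁻¹ ≤ 1 - t := by
            rw [inv_eq_one_div, div_le_iff₀ (by positivity)]
            nlinarith [mul_nonneg ht0.le (show (0:ℝ) ≤ 1/6 - t by linarith)]
          rw [Real.exp_neg]
          exact i2.trans i3
        calc Real.exp (-(1.2 * (2 * (n:ℝ) + 1) * t))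
            = (Real.exp (-(1.2 * t))) ^ (2 * n + 1) := by
              rw [← Real.exp_nat_mul]; congr 1; push_cast; ring
          _ ≤ (1 - t) ^ (2 * n + 1) := pow_le_pow_left₀ (Real.exp_pos _).le hebd _
          _ ≤ r ^ (2 * n + 1) := pow_le_pow_left₀ (by linarith) ha.le _
      calc C0 = Real.exp (-(c * (θ * t) ^ (-β))) * Real.exp (-(1.2 * (2 * (n:ℝ) + 1) * t)) := by
            rw [hC0, ← Real.exp_add]; ring_nf
        _ ≤ Real.exp (-c * (1 - r) ^ (-β)) * r ^ (2 * n + 1) :=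
            mul_le_mul hexp1 hexp2 (Real.exp_pos _).le (Real.exp_pos _).le
    have hint : IntegrableOn (fun r : ℝ => Real.exp (-c * (1 - r) ^ (-β)) * r ^ (2 * n + 1))
        (Ioc (1 - t) (1 - θ * t)) := (mt1_integrableOn β c hc _).mono_set hsub
    have hge := setIntegral_ge_of_const_le measurableSet_Ioc measure_Ioc_lt_top.ne hpt hint
    have hvol : (volume (Ioc (1 - t) (1 - θ * t))).toReal = (1 - θ) * t := by
      rw [Real.volume_Ioc, ENNReal.toReal_ofReal (by linarith [hθtt])]
      ring
    rw [measureReal_def, hvol, smul_eq_mul] at hge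
    have hmono : (∫ r in Ioc (1 - t) (1 - θ * t), Real.exp (-c * (1 - r) ^ (-β)) * r ^ (2 * n + 1))
        ≤ ∫ r in Ioo (0:ℝ) 1, Real.exp (-c * (1 - r) ^ (-β)) * r ^ (2 * n + 1) := by
      apply setIntegral_mono_set (mt1_integrableOn β c hc _) ?_ (HasSubset.Subset.eventuallyLE hsub)
      filter_upwards [ae_restrict_mem measurableSet_Ioo] with r hr
      have hr0 : (0:ℝ) ≤ r := hr.1.le
      positivity
    -- exponent comparison
    have hpos2 : (0:ℝ) < 2 * ((1 - θ) * t) := by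
      have := mul_pos (show (0:ℝ) < 1 - θ by linarith) ht0
      linarith
    have ha' : c * (θ * t) ^ (-β) ≤ 1.2 * (β ^ (-γ) * c' * (2 ^ γ * (n:ℝ) ^ γ)) := by
      have e5 : c * (θ * t) ^ (-β) = θ ^ (-β) * (c * t ^ (-β)) := by
        rw [Real.mul_rpow hθ0.le ht0.le]; ring
      rw [e5, htpow, h2nγ]
      have hbase : (0:ℝ) ≤ β ^ (-γ) * c' * (2 ^ γ * (n:ℝ) ^ γ) := by positivity
      linarith [mul_le_mul_of_nonneg_right hθβ hbase]
    have hb' : 1.2 * (2 * (n:ℝ) + 1) * t ≤ 1.32 * (β ^ (1 - γ) * c' * (2 ^ γ * (n:ℝ) ^ γ)) := by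
      have h21 : 2 * (n:ℝ) + 1 ≤ 1.1 * (2 * (n:ℝ)) := by linarith
      have hlin := htlin
      rw [h2nγ] at hlin
      linarith [mul_le_mul_of_nonneg_right h21 ht0.le, hlin]
    have hc' : -(m * 2 ^ γ * c') * (n:ℝ) ^ γ ≤ Real.log (2 * ((1 - θ) * t)) := by
      rw [Real.le_log_iff_exp_le hpos2]
      have hpow1 : (2 * (n:ℝ)) ^ ((1:ℝ) - γ) ≤ 2 * (n:ℝ) := by
        have h1 : (1:ℝ) ≤ 2 * (n:ℝ) := by linarith
        have := Real.rpow_le_rpow_of_exponent_le h1 (show (1:ℝ) - γ ≤ 1 by linarith)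
        rwa [Real.rpow_one] at this
      have hinv : (2 * (n:ℝ))⁻¹ ≤ ((2 * (n:ℝ)) ^ ((1:ℝ) - γ))⁻¹ := by
        apply inv_anti₀ (Real.rpow_pos_of_pos hn2 _) hpow1
      have htge : (β * c) ^ ((1:ℝ) - γ) / (2 * (n:ℝ)) ≤ t := by
        rw [e3, div_eq_mul_inv]
        have hbcpos : (0:ℝ) ≤ (β * c) ^ ((1:ℝ) - γ) := Real.rpow_nonneg (by positivity) _
        exact mul_le_mul_of_nonneg_left hinv hbcpos
      have h4' : (n:ℝ) * Real.exp (-(m * 2 ^ γ * c') * (n:ℝ) ^ γ)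
          ≤ (1 - θ) * (β * c) ^ ((1:ℝ) - γ) := by rw [← hwγ]; exact h4
      have hE : Real.exp (-(m * 2 ^ γ * c') * (n:ℝ) ^ γ)
          ≤ (1 - θ) * (β * c) ^ ((1:ℝ) - γ) / (n:ℝ) := by
        rw [le_div_iff₀ hnR]; linarith [h4']
      refine hE.trans ?_
      have hid : (1 - θ) * (β * c) ^ ((1:ℝ) - γ) / (n:ℝ)
          = 2 * ((1 - θ) * ((β * c) ^ ((1:ℝ) - γ) / (2 * (n:ℝ)))) := by
        field_simp
      rw [hid]
      have h1θ : (0:ℝ) ≤ 1 - θ := by linarith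
      linarith [mul_le_mul_of_nonneg_left htge h1θ]
    have h8 : (m + 1.2 * β ^ (-γ) + 1.32 * β ^ (1 - γ)) * 2 ^ γ * c' * (n:ℝ) ^ γ
        = 2 * (κ * c') * (n:ℝ) ^ γ := by rw [hmdef, hκdef]; ring
    have hexp : -2 * (κ * c') * (n:ℝ) ^ γ
        ≤ Real.log (2 * ((1 - θ) * t)) - (c * (θ * t) ^ (-β) + 1.2 * (2 * (n:ℝ) + 1) * t) := by
      clear_value t θ c' κ m Bβ γ
      linarith [ha', hb', hc', h8]
    calc Real.exp (-2 * (κ * c') * (n:ℝ) ^ γ)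
        ≤ Real.exp (Real.log (2 * ((1 - θ) * t))
            - (c * (θ * t) ^ (-β) + 1.2 * (2 * (n:ℝ) + 1) * t)) := Real.exp_le_exp.mpr hexp
      _ = 2 * ((1 - θ) * t) * C0 := by
          rw [Real.exp_sub, Real.exp_log hpos2, hC0, Real.exp_neg, div_eq_mul_inv]
      _ = 2 * (C0 * ((1 - θ) * t)) := by ring
      _ ≤ 2 * ∫ r in Ioc (1 - t) (1 - θ * t),
            Real.exp (-c * (1 - r) ^ (-β)) * r ^ (2 * n + 1) := by linarith [hge]
      _ ≤ momentT1 β c n := by rw [momentT1]; linarith [hmono]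
  · -- UPPER BOUND
    have hup : ∀ r ∈ Ioo (0:ℝ) 1,
        Real.exp (-c * (1 - r) ^ (-β)) * r ^ (2 * n + 1)
          ≤ Real.exp (-(Bβ * 2 ^ γ * c' * (n:ℝ) ^ γ)) := by
      intro r hr
      obtain ⟨hr0, hr1⟩ := hr
      have h1r : 0 < 1 - r := by linarith
      have hrexp : r ≤ Real.exp (-(1 - r)) := by
        have := Real.add_one_le_exp (-(1 - r)); linarith
      have hpow : r ^ (2 * n + 1) ≤ Real.exp (-((2 * (n:ℝ) + 1) * (1 - r))) := by
        calc r ^ (2 * n + 1) ≤ (Real.exp (-(1 - r))) ^ (2 * n + 1) :=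
              pow_le_pow_left₀ hr0.le hrexp _
          _ = Real.exp (-((2 * (n:ℝ) + 1) * (1 - r))) := by
              rw [← Real.exp_nat_mul]
              congr 1
              push_cast
              ring
      have hkey : Bβ * 2 ^ γ * c' * (n:ℝ) ^ γ ≤ c * (1 - r) ^ (-β) + (2 * (n:ℝ) + 1) * (1 - r) := by
        have ham := mt1_amgm β hβ hc hn2 h1r
        have h1 : 2 * (n:ℝ) * (1 - r) ≤ (2 * (n:ℝ) + 1) * (1 - r) := by nlinarith
        calc Bβ * 2 ^ γ * c' * (n:ℝ) ^ γ
            = (β + 1) * β ^ (-γ) * c ^ (1 / (β + 1)) * (2 * (n:ℝ)) ^ γ := by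
              rw [h2nγ, hBdef, hc'def]; ring
          _ ≤ c * (1 - r) ^ (-β) + 2 * (n:ℝ) * (1 - r) := ham
          _ ≤ _ := by linarith
      calc Real.exp (-c * (1 - r) ^ (-β)) * r ^ (2 * n + 1)
          ≤ Real.exp (-c * (1 - r) ^ (-β)) * Real.exp (-((2 * (n:ℝ) + 1) * (1 - r))) := by
            apply mul_le_mul_of_nonneg_left hpow (Real.exp_pos _).le
        _ = Real.exp (-(c * (1 - r) ^ (-β) + (2 * (n:ℝ) + 1) * (1 - r))) := by
            rw [← Real.exp_add]; ring_nf
        _ ≤ Real.exp (-(Bβ * 2 ^ γ * c' * (n:ℝ) ^ γ)) := by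
            rw [Real.exp_le_exp]; linarith
    have hIu : (∫ r in Ioo (0:ℝ) 1, Real.exp (-c * (1 - r) ^ (-β)) * r ^ (2 * n + 1))
        ≤ Real.exp (-(Bβ * 2 ^ γ * c' * (n:ℝ) ^ γ)) := by
      have hmono := setIntegral_mono_on (mt1_integrableOn β c hc (2 * n + 1))
        (integrableOn_const measure_Ioo_lt_top.ne (by simp)) measurableSet_Ioo hup
      rw [setIntegral_const, measureReal_def, Real.volume_Ioo] at hmono
      simpa using hmono
    have : momentT1 β c n ≤ 2 * Real.exp (-(Bβ * 2 ^ γ * c' * (n:ℝ) ^ γ)) := by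
      rw [momentT1]; linarith
    refine this.trans ?_
    have h6 : Bβ * 2 ^ γ * c' * (n:ℝ) ^ γ = κ * c' * (n:ℝ) ^ γ + κ / 3 * c' * (n:ℝ) ^ γ := by
      rw [hκdef]; ring
    have h7 : (2:ℝ) ≤ Real.exp (κ / 3 * c' * (n:ℝ) ^ γ) := by
      rw [← Real.exp_log (by norm_num : (0:ℝ) < 2)]
      exact Real.exp_le_exp.mpr h1
    calc 2 * Real.exp (-(Bβ * 2 ^ γ * c' * (n:ℝ) ^ γ))
        ≤ Real.exp (κ / 3 * c' * (n:ℝ) ^ γ) * Real.exp (-(Bβ * 2 ^ γ * c' * (n:ℝ) ^ γ)) :=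
          mul_le_mul_of_nonneg_right h7 (Real.exp_pos _).le
      _ = Real.exp (κ / 3 * c' * (n:ℝ) ^ γ - Bβ * 2 ^ γ * c' * (n:ℝ) ^ γ) := by
          rw [← Real.exp_add]; ring_nf
      _ ≤ Real.exp (-(κ * c') * (n:ℝ) ^ γ) := Real.exp_le_exp.mpr (by linarith [h6])
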